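/- Let q_w ≥ 1, q_p ≥ 0 and n ≥ 0 be natural numbers. For every function f : ℝ → ℝ that is (q_w − 1)-times continuously differentiable on [0, n+1] and agrees with a polynomial of degree ≤ q_w + q_p on each interval [j, j+1] for j = 0, …, n, there exist functions s_0, …, s_{q_p} : ℝ → ℝ, each (q_w − 1)-times continuously differentiable on [0, n+1] and agreeing with a polynomial of degree ≤ q_w on each interval [j, j+1] for j = 0, …, n, such that f(ξ) = Σ_{j=0}^{q_p} ξ^j · s_j(ξ) for all ξ ∈ [0, n+1]. (That is, blending by splines of degree q_w and smoothness C^{q_w−1} with local polynomials of degree q_p reproduces the full spline space: span(P_global) = S^{q_w+q_p, q_w−1}.) -/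

import Mathlib

open Set Polynomial


lemma tp_hasDerivAt (m : ℕ) (x : ℝ) :
    HasDerivAt (fun x : ℝ => max x 0 ^ (m + 2)) ((m + 2) * max x 0 ^ (m + 1)) x := by
  rcases lt_trichotomy x 0 with hx | hx | hx
  · have h0 : max x 0 = 0 := max_eq_right hx.le
    rw [h0, zero_pow (Nat.succ_ne_zero m), mul_zero]
    have : HasDerivAt (fun _ : ℝ => (0:ℝ)) 0 x := hasDerivAt_const x 0
    refine this.congr_of_eventuallyEq ?_
    filter_upwards [eventually_lt_nhds hx] with y hy
    simp [max_eq_right hy.le, zero_pow (Nat.succ_ne_zero (m+1))]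
  · subst hx
    rw [max_self, zero_pow (Nat.succ_ne_zero m), mul_zero]
    rw [hasDerivAt_iff_tendsto_slope]
    apply squeeze_zero_norm (a := fun y : ℝ => |y| ^ (m + 1))
    · intro y
      rcases eq_or_ne y 0 with rfl | hy
      · simp [slope]
      · rw [slope_def_field]
        simp only [max_self, zero_pow (Nat.succ_ne_zero (m+1)), sub_zero]
        rw [div_eq_mul_inv, norm_mul, norm_inv]
        have hmax0 : (0:ℝ) ≤ max y 0 := le_max_right y 0
        have hmaxy : max y 0 ≤ |y| := max_le (le_abs_self y) (abs_nonneg y)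
        calc ‖max y 0 ^ (m + 2)‖ * ‖y‖⁻¹ ≤ |y| ^ (m+2) * ‖y‖⁻¹ := by
              gcongr
              rw [Real.norm_eq_abs, abs_pow, abs_of_nonneg hmax0]
              exact pow_le_pow_left₀ hmax0 hmaxy _
          _ = |y| ^ (m+1) := by
              rw [Real.norm_eq_abs, pow_succ, mul_assoc,
                mul_inv_cancel₀ (abs_ne_zero.2 hy), mul_one]
    · have : Filter.Tendsto (fun y : ℝ => |y| ^ (m+1)) (nhds 0) (nhds (|(0:ℝ)| ^ (m+1))) :=
        ((continuous_abs.pow (m+1)).tendsto 0)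
      simpa [zero_pow (Nat.succ_ne_zero m)] using this.mono_left nhdsWithin_le_nhds
  · have h0 : max x 0 = x := max_eq_left hx.le
    have h1 : HasDerivAt (fun y : ℝ => y ^ (m + 2)) (((m:ℝ) + 2) * max x 0 ^ (m + 1)) x := by
      have := hasDerivAt_pow (m + 2) x
      push_cast at this
      simpa [h0] using this
    refine h1.congr_of_eventuallyEq ?_
    filter_upwards [eventually_gt_nhds hx] with y hy
    simp [max_eq_left hy.le]

lemma tp_contDiff (m : ℕ) : ContDiff ℝ (m : ℕ) (fun x : ℝ => max x 0 ^ (m + 1)) := by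
  induction m with
  | zero =>
    rw [show (((0:ℕ)):WithTop ℕ∞) = 0 by simp, contDiff_zero]
    exact (continuous_id.max continuous_const).pow 1
  | succ k ih =>
    have hdiff : Differentiable ℝ (fun x : ℝ => max x 0 ^ (k + 2)) :=
      fun x => (tp_hasDerivAt k x).differentiableAt
    have hderiv : deriv (fun x : ℝ => max x 0 ^ (k + 2))
        = fun x => ((k:ℝ) + 2) * max x 0 ^ (k + 1) := funext fun x => (tp_hasDerivAt k x).deriv
    rw [show (((k+1:ℕ)):WithTop ℕ∞) = (k:ℕ) + 1 by push_cast; rfl, contDiff_succ_iff_deriv]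
    refine ⟨hdiff, ?_, ?_⟩
    · intro h; exact absurd h (by simp)
    · rw [hderiv]; exact contDiff_const.mul ih

lemma tpc_contDiff (m : ℕ) (c : ℝ) :
    ContDiff ℝ (m : ℕ) (fun x : ℝ => max (x - c) 0 ^ (m + 1)) :=
  (tp_contDiff m).comp (contDiff_id.sub contDiff_const)

lemma key_dvd (m : ℕ) : ∀ (a b c : ℝ), a < c → c < b → ∀ (F : ℝ → ℝ) (g : Polynomial ℝ),
    ContDiffOn ℝ (m : ℕ) F (Set.Icc a b) →
    (∀ x ∈ Set.Icc a c, F x = 0) → (∀ x ∈ Set.Icc c b, F x = g.eval x) →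
    (X - C c) ^ (m + 1) ∣ g := by
  induction m with
  | zero =>
    intro a b c hac hcb F g _ hL hR
    have hg0 : g.eval c = 0 := by
      rw [← hR c ⟨le_refl c, hcb.le⟩]; exact hL c ⟨hac.le, le_refl c⟩
    simpa [pow_one] using dvd_iff_isRoot.2 hg0
  | succ k ih =>
    intro a b c hac hcb F g hF hL hR
    have hab : a < b := hac.trans hcb
    have hu : UniqueDiffOn ℝ (Set.Icc a b) := uniqueDiffOn_Icc hab
    have hg0 : g.eval c = 0 := by
      rw [← hR c ⟨le_refl c, hcb.le⟩]; exact hL c ⟨hac.le, le_refl c⟩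
    set F' := derivWithin F (Set.Icc a b) with hF'def
    have hF' : ContDiffOn ℝ (k : ℕ) F' (Set.Icc a b) :=
      hF.derivWithin hu (le_of_eq (by push_cast; rfl))
    -- differentiability of F at c
    have hcmem : Set.Icc a b ∈ nhds c := Icc_mem_nhds hac hcb
    have hFc : DifferentiableAt ℝ F c := by
      have h1 : DifferentiableWithinAt ℝ F (Set.Icc a b) c :=
        (hF.differentiableOn (by simp))
          c ⟨hac.le, hcb.le⟩
      exact h1.differentiableAt hcmem
    -- deriv F c = 0 (from the left)
    have hderiv0 : deriv F c = 0 := by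
      have h1 : HasDerivWithinAt F (deriv F c) (Set.Iic c) c :=
        hFc.hasDerivAt.hasDerivWithinAt
      have he : (fun _ : ℝ => (0:ℝ)) =ᶠ[nhdsWithin c (Set.Iic c)] F := by
        filter_upwards [self_mem_nhdsWithin,
          ((eventually_gt_nhds hac).filter_mono nhdsWithin_le_nhds)] with y hy1 hy2
        exact (hL y ⟨hy2.le, hy1⟩).symm
      have h2 : HasDerivWithinAt (fun _ : ℝ => (0:ℝ)) (deriv F c) (Set.Iic c) c :=
        h1.congr_of_eventuallyEq he (by simpa using (hL c ⟨hac.le, le_refl c⟩).symm)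
      have h3 := h2.derivWithin (uniqueDiffOn_Iic c c (le_refl c))
      rw [derivWithin_fun_const] at h3
      exact h3.symm
    -- deriv F c = derivative g eval c (from the right)
    have hderivg : (derivative g).eval c = 0 := by
      have h1 : HasDerivWithinAt F (deriv F c) (Set.Ici c) c :=
        hFc.hasDerivAt.hasDerivWithinAt
      have he : (fun y : ℝ => g.eval y) =ᶠ[nhdsWithin c (Set.Ici c)] F := by
        filter_upwards [self_mem_nhdsWithin,
          ((eventually_lt_nhds hcb).filter_mono nhdsWithin_le_nhds)] with y hy1 hy2
        exact (hR y ⟨hy1, hy2.le⟩).symm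
      have h2 : HasDerivWithinAt (fun y : ℝ => g.eval y) (deriv F c) (Set.Ici c) c :=
        h1.congr_of_eventuallyEq he (hR c ⟨le_refl c, hcb.le⟩).symm
      have h3 := h2.derivWithin (uniqueDiffOn_Ici c c (le_refl c))
      rw [DifferentiableAt.derivWithin (Polynomial.differentiableAt (p := g))
        (uniqueDiffOn_Ici c c (le_refl c)), Polynomial.deriv] at h3
      exact h3.trans hderiv0
    -- F' vanishes on [a,c]
    have hL' : ∀ x ∈ Set.Icc a c, F' x = 0 := by
      intro x hx
      rcases eq_or_lt_of_le hx.2 with hxc | hxc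
      · subst hxc
        rw [hF'def, derivWithin_of_mem_nhds hcmem, hderiv0]
      · have he : F =ᶠ[nhdsWithin x (Set.Icc a b)] (fun _ : ℝ => (0:ℝ)) := by
          filter_upwards [self_mem_nhdsWithin,
            ((eventually_lt_nhds hxc).filter_mono nhdsWithin_le_nhds)] with y hy1 hy2
          exact hL y ⟨hy1.1, hy2.le⟩
        rw [hF'def, he.derivWithin_eq (hL x ⟨hx.1, hx.2⟩),
          derivWithin_fun_const, Pi.zero_apply]
    -- F' agrees with derivative g on [c,b]
    have hR' : ∀ x ∈ Set.Icc c b, F' x = (derivative g).eval x := by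
      intro x hx
      rcases eq_or_lt_of_le hx.1 with hxc | hxc
      · rw [← hxc, hF'def, derivWithin_of_mem_nhds hcmem, hderiv0, hderivg]
      · have he : F =ᶠ[nhdsWithin x (Set.Icc a b)] (fun y : ℝ => g.eval y) := by
          filter_upwards [self_mem_nhdsWithin,
            ((eventually_gt_nhds hxc).filter_mono nhdsWithin_le_nhds)] with y hy1 hy2
          exact hR y ⟨hy2.le, hy1.2⟩
        have hxmem : x ∈ Set.Icc a b := ⟨hac.le.trans hx.1, hx.2⟩
        rw [hF'def, he.derivWithin_eq (hR x hx),
          DifferentiableAt.derivWithin (Polynomial.differentiableAt (p := g)) (hu x hxmem),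
          Polynomial.deriv]
    have hdvd : (X - C c) ^ (k + 1) ∣ derivative g := ih a b c hac hcb F' (derivative g) hF' hL' hR'
    -- conclude
    by_cases hg : g = 0
    · simp [hg]
    by_cases hdg : derivative g = 0
    · exfalso
      have h0 : g.natDegree = 0 := natDegree_eq_zero_of_derivative_eq_zero hdg
      have := Polynomial.eq_C_of_natDegree_eq_zero h0
      rw [this] at hg0
      simp only [eval_C] at hg0
      exact hg (by rw [this, hg0, map_zero])
    · have h1 : k + 1 ≤ rootMultiplicity c (derivative g) := (le_rootMultiplicity_iff hdg).2 hdvd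
      have h2 : (derivative g).rootMultiplicity c = g.rootMultiplicity c - 1 :=
        derivative_rootMultiplicity_of_root hg0
      have h3 : 0 < g.rootMultiplicity c := (rootMultiplicity_pos hg).2 hg0
      have h4 : k + 1 + 1 ≤ g.rootMultiplicity c := by omega
      exact (le_rootMultiplicity_iff hg).1 h4

lemma poly_contDiff (p : Polynomial ℝ) (N : WithTop ℕ∞) :
    ContDiff ℝ N (fun x : ℝ => p.eval x) := by
  have h : (fun x : ℝ => p.eval x)
      = fun x => ∑ i ∈ Finset.range (p.natDegree + 1), p.coeff i * x ^ i :=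
    funext fun x => eval_eq_sum_range' (Nat.lt_succ_self _) x
  rw [h]
  exact ContDiff.sum fun i _ => contDiff_const.mul (contDiff_id.pow i)


/-- Blending by splines of degree `q_w` and smoothness `C^{q_w - 1}` with local polynomials
of degree `q_p` reproduces the full spline space `S^{q_w+q_p, q_w-1}`: every function that is
`C^{q_w-1}` on `[0, n+1]` and piecewise polynomial of degree `≤ q_w + q_p` on the integer
intervals `[j, j+1]`, `j = 0, …, n`, can be written as `Σ_{j=0}^{q_p} ξ^j · s_j(ξ)` with each
`s_j` a `C^{q_w-1}` spline of degree `≤ q_w` on the same knot intervals. -/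
theorem spline_blending_reproduces_spline_space (q_w q_p n : ℕ) (hqw : 1 ≤ q_w)
    (f : ℝ → ℝ)
    (hf : ContDiffOn ℝ (q_w - 1 : ℕ) f (Set.Icc (0 : ℝ) ((n : ℝ) + 1)))
    (hpiece : ∀ j : ℕ, j ≤ n → ∃ p : Polynomial ℝ, p.natDegree ≤ q_w + q_p ∧
      ∀ ξ ∈ Set.Icc (j : ℝ) ((j : ℝ) + 1), f ξ = p.eval ξ) :
    ∃ s : Fin (q_p + 1) → ℝ → ℝ,
      (∀ j : Fin (q_p + 1),
        ContDiffOn ℝ (q_w - 1 : ℕ) (s j) (Set.Icc (0 : ℝ) ((n : ℝ) + 1)) ∧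
        ∀ k : ℕ, k ≤ n → ∃ p : Polynomial ℝ, p.natDegree ≤ q_w ∧
          ∀ ξ ∈ Set.Icc (k : ℝ) ((k : ℝ) + 1), s j ξ = p.eval ξ) ∧
      ∀ ξ ∈ Set.Icc (0 : ℝ) ((n : ℝ) + 1),
        f ξ = ∑ j : Fin (q_p + 1), ξ ^ (j : ℕ) * s j ξ := by
  obtain ⟨m₀, rfl⟩ : ∃ m, q_w = m + 1 := ⟨q_w - 1, (Nat.succ_pred_eq_of_pos hqw).symm⟩
  simp only [Nat.add_sub_cancel] at hf ⊢
  classical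
  let p : ℕ → Polynomial ℝ := fun j => if h : j ≤ n then (hpiece j h).choose else 0
  have hdeg : ∀ j, j ≤ n → (p j).natDegree ≤ (m₀+1) + q_p := by
    intro j h; simp only [p, dif_pos h]; exact (hpiece j h).choose_spec.1
  have heval : ∀ j, j ≤ n → ∀ ξ ∈ Set.Icc (j:ℝ) ((j:ℝ)+1), f ξ = (p j).eval ξ := by
    intro j h; simp only [p, dif_pos h]; exact (hpiece j h).choose_spec.2
  -- divisibility at inner knots
  have hdvd : ∀ i, i < n → ∃ r : Polynomial ℝ, r.natDegree ≤ q_p ∧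
      p (i+1) - p i = (X - C ((i:ℝ)+1))^(m₀+1) * r := by
    intro i hi
    have hin : (i:ℝ) + 2 ≤ (n:ℝ) + 1 := by
      have : (i:ℝ) + 1 ≤ (n:ℝ) := by exact_mod_cast Nat.succ_le_of_lt hi
      linarith
    have hsub : Set.Icc (i:ℝ) ((i:ℝ)+2) ⊆ Set.Icc (0:ℝ) ((n:ℝ)+1) :=
      Set.Icc_subset_Icc (by positivity) hin
    have hF : ContDiffOn ℝ (m₀ : ℕ) (fun ξ => f ξ - (p i).eval ξ)
        (Set.Icc (i:ℝ) ((i:ℝ)+2)) :=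
      (hf.mono hsub).sub ((poly_contDiff (p i) _).contDiffOn)
    have hkey := key_dvd m₀ (i:ℝ) ((i:ℝ)+2) ((i:ℝ)+1) (by linarith) (by linarith)
      (fun ξ => f ξ - (p i).eval ξ) (p (i+1) - p i) hF ?_ ?_
    rotate_left
    · intro x hx
      show f x - (p i).eval x = 0
      rw [heval i (le_of_lt hi) x hx, sub_self]
    · intro x hx
      have hx' : x ∈ Set.Icc (((i+1:ℕ)):ℝ) ((((i+1:ℕ)):ℝ)+1) := by
        push_cast
        exact ⟨by linarith [hx.1], by linarith [hx.2]⟩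
      show f x - (p i).eval x = _
      rw [eval_sub, heval (i+1) hi x hx']
    obtain ⟨r, hr⟩ := hkey
    by_cases hr0 : r = 0
    · exact ⟨0, by simp, by rw [hr, hr0]⟩
    · refine ⟨r, ?_, hr⟩
      have h1 : (p (i+1) - p i).natDegree ≤ (m₀+1) + q_p :=
        (natDegree_sub_le _ _).trans (max_le (hdeg (i+1) hi) (hdeg i hi.le))
      have hbase : ((X - C ((i:ℝ)+1))^(m₀+1)) ≠ 0 := pow_ne_zero _ (X_sub_C_ne_zero _)
      rw [hr, natDegree_mul hbase hr0, natDegree_pow, natDegree_X_sub_C, mul_one] at h1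
      omega
  let r : ℕ → Polynomial ℝ := fun i => if h : i < n then (hdvd i h).choose else 0
  have hrdeg : ∀ i, (r i).natDegree ≤ q_p := by
    intro i; simp only [r]; split
    · exact (hdvd i ‹_›).choose_spec.1
    · simp
  have hreq : ∀ i, i < n → p (i+1) - p i = (X - C ((i:ℝ)+1))^(m₀+1) * r i := by
    intro i h; simp only [r, dif_pos h]; exact (hdvd i h).choose_spec.2
  -- telescoping
  have htel : ∀ m, m ≤ n →
      p m = p 0 + ∑ i ∈ Finset.range m, (X - C ((i:ℝ)+1))^(m₀+1) * r i := by
    intro m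
    induction m with
    | zero => simp
    | succ m' ih =>
      intro h
      have h' : m' < n := Nat.lt_of_succ_le h
      rw [Finset.sum_range_succ]
      linear_combination ih h'.le + hreq m' h'
  -- the blending splines
  let A : Fin (q_p+1) → Polynomial ℝ := fun j =>
    if (j:ℕ) = 0 then ∑ i ∈ Finset.range (m₀+2), C ((p 0).coeff i) * X^i
    else C ((p 0).coeff ((m₀+1) + j)) * X^(m₀+1)
  have hAdeg : ∀ j, (A j).natDegree ≤ m₀ + 1 := by
    intro j; simp only [A]; split
    · refine natDegree_sum_le_of_forall_le _ _ (fun i hi => ?_)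
      refine (natDegree_C_mul_X_pow_le _ _).trans ?_
      simp only [Finset.mem_range] at hi; omega
    · exact natDegree_C_mul_X_pow_le _ _
  let T : ℕ → ℝ → ℝ := fun i ξ => max (ξ - ((i:ℝ)+1)) 0 ^ (m₀+1)
  let s : Fin (q_p+1) → ℝ → ℝ := fun j ξ =>
    (A j).eval ξ + ∑ i ∈ Finset.range n, ((r i).coeff j) * T i ξ
  have hA : ∀ ξ : ℝ, ∑ j : Fin (q_p+1), ξ^(j:ℕ) * (A j).eval ξ = (p 0).eval ξ := by
    intro ξ
    rw [eval_eq_sum_range' (lt_of_le_of_lt (hdeg 0 (Nat.zero_le n)) (Nat.lt_succ_self _)) ξ]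
    have h2 : (m₀ + 1 + q_p).succ = (m₀ + 2) + q_p := by omega
    rw [h2, Finset.sum_range_add,
      Fin.sum_univ_succ (f := fun j : Fin (q_p+1) => ξ ^ (j:ℕ) * eval ξ (A j))]
    congr 1
    · simp only [A, Fin.val_zero, if_pos rfl, if_true, pow_zero, one_mul, eval_finset_sum,
        eval_mul, eval_C, eval_pow, eval_X]
    · have hsucc : ∀ j : Fin q_p, A j.succ = C ((p 0).coeff ((m₀+1) + ((j:ℕ) + 1))) * X^(m₀+1) := by
        intro j
        simp only [A, Fin.val_succ]
        rw [if_neg (Nat.succ_ne_zero _)]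
      calc ∑ j : Fin q_p, ξ ^ ((j.succ : Fin (q_p+1)) : ℕ) * eval ξ (A j.succ)
          = ∑ j : Fin q_p, (p 0).coeff ((m₀+2) + (j:ℕ)) * ξ^((m₀+2) + (j:ℕ)) := by
            refine Finset.sum_congr rfl fun j _ => ?_
            rw [hsucc j, Fin.val_succ]
            simp only [eval_mul, eval_C, eval_pow, eval_X]
            rw [show m₀ + 1 + ((j:ℕ) + 1) = m₀ + 2 + (j:ℕ) by omega,
              show m₀ + 2 + (j:ℕ) = ((j:ℕ)+1) + (m₀+1) by omega, pow_add]
            ring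
        _ = ∑ x ∈ Finset.range q_p, (p 0).coeff ((m₀+2) + x) * ξ^((m₀+2) + x) :=
            Fin.sum_univ_eq_sum_range (fun x => (p 0).coeff ((m₀+2) + x) * ξ^((m₀+2) + x)) q_p
  refine ⟨s, fun j => ⟨?_, ?_⟩, ?_⟩
  · exact ContDiff.contDiffOn ((poly_contDiff (A j) _).add
      (ContDiff.sum fun i _ => contDiff_const.mul (tpc_contDiff m₀ _)))
  · intro k hk
    refine ⟨A j + ∑ i ∈ Finset.range k, C ((r i).coeff j) * (X - C ((i:ℝ)+1))^(m₀+1), ?_, ?_⟩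
    · refine (natDegree_add_le _ _).trans (max_le (hAdeg j) ?_)
      refine natDegree_sum_le_of_forall_le _ _ fun i _ => ?_
      refine (natDegree_C_mul_le _ _).trans ?_
      rw [natDegree_pow, natDegree_X_sub_C, mul_one]
    · intro ξ hξ
      have hsum : ∑ i ∈ Finset.range n, ((r i).coeff j) * T i ξ
          = ∑ i ∈ Finset.range k, ((r i).coeff j) * T i ξ := by
        refine (Finset.sum_subset (Finset.range_subset_range.2 hk) ?_).symm
        intro i _ hik
        have hki : k ≤ i := by simpa using hik
        have hki' : (k:ℝ) ≤ (i:ℝ) := Nat.cast_le.2 hki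
        have h0 : ξ - ((i:ℝ)+1) ≤ 0 := by
          have := hξ.2; linarith
        simp only [T]
        rw [max_eq_right h0, zero_pow (Nat.succ_ne_zero m₀), mul_zero]
      simp only [s]
      rw [hsum, eval_add, eval_finset_sum]
      congr 1
      refine Finset.sum_congr rfl fun i hi => ?_
      simp only [Finset.mem_range] at hi
      have hik : (i:ℝ) + 1 ≤ ξ := by
        have h3 : (i:ℝ) + 1 ≤ (k:ℝ) := by exact_mod_cast Nat.succ_le_of_lt hi
        linarith [hξ.1]
      simp only [T, eval_mul, eval_C, eval_pow, eval_sub, eval_X]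
      rw [max_eq_left (by linarith)]
  · intro ξ hξ
    have hξ0 : (0:ℝ) ≤ ξ := hξ.1
    set m := min n ⌊ξ⌋₊ with hm
    have hmn : m ≤ n := min_le_left _ _
    have hm1 : (m:ℝ) ≤ ξ := le_trans (Nat.cast_le.2 (min_le_right _ _)) (Nat.floor_le hξ0)
    have hm2 : ξ ≤ (m:ℝ) + 1 := by
      rcases le_or_gt (⌊ξ⌋₊) n with h | h
      · rw [hm, min_eq_right h]
        exact (Nat.lt_floor_add_one ξ).le
      · rw [hm, min_eq_left h.le]
        exact hξ.2
    rw [heval m hmn ξ ⟨hm1, hm2⟩, htel m hmn, eval_add, eval_finset_sum]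
    have hrhs : ∑ j : Fin (q_p + 1), ξ ^ (j:ℕ) * s j ξ
        = (∑ j : Fin (q_p+1), ξ^(j:ℕ) * (A j).eval ξ)
          + ∑ i ∈ Finset.range n, T i ξ * (r i).eval ξ := by
      simp only [s, mul_add, Finset.mul_sum, Finset.sum_add_distrib]
      congr 1
      rw [Finset.sum_comm]
      refine Finset.sum_congr rfl fun i _ => ?_
      have hev : (r i).eval ξ = ∑ jj ∈ Finset.range (q_p+1), (r i).coeff jj * ξ^jj :=
        eval_eq_sum_range' (Nat.lt_succ_of_le (hrdeg i)) ξ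
      rw [hev, Finset.mul_sum,
        ← Fin.sum_univ_eq_sum_range (fun jj => T i ξ * ((r i).coeff jj * ξ^jj))]
      refine Finset.sum_congr rfl fun jj _ => by ring
    rw [hrhs, hA ξ]
    congr 1
    have h0 : ∀ i ∈ Finset.range n, i ∉ Finset.range m → T i ξ * (r i).eval ξ = 0 := by
      intro i _ him
      have hmi : m ≤ i := by simpa using him
      have hle : ξ - ((i:ℝ)+1) ≤ 0 := by
        have : (m:ℝ) ≤ (i:ℝ) := Nat.cast_le.2 hmi
        linarith
      simp only [T]
      rw [max_eq_right hle, zero_pow (Nat.succ_ne_zero m₀), zero_mul]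
    rw [← Finset.sum_subset (Finset.range_subset_range.2 hmn) h0]
    refine Finset.sum_congr rfl fun i hi => ?_
    simp only [Finset.mem_range] at hi
    have hile : (i:ℝ) + 1 ≤ ξ := by
      have h3 : (i:ℝ)+1 ≤ (m:ℝ) := by exact_mod_cast Nat.succ_le_of_lt hi
      linarith
    simp only [T, eval_mul, eval_pow, eval_sub, eval_X, eval_C]
    rw [max_eq_left (by linarith)]
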